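/- (Deterministic core of Theorem 6, spectral norm bound.) Let Ω₀ be a symmetric positive definite p×p matrix with Σ₀ = Ω₀^{-1} and max_i Σ_j |(Ω₀)_{ij}|^q ≤ s₀ for some 0 ≤ q < 1. Let Ω̂ be a symmetric matrix obtained by the CLIME symmetrization of a matrix Ω̂₁ satisfying |Σ_n Ω̂₁ − I|_∞ ≤ λ and column-wise ℓ₁-minimality: each column of Ω̂₁ minimizes the ℓ₁ norm subject to the corresponding column constraint. If λ ≥ ‖Ω₀‖_{L₁} · |Σ_n − Σ₀|_∞, then ‖Ω̂ − Ω₀‖₂ ≤ 2(1 + 2^{1−q} + 3^{1−q})(4‖Ω₀‖_{L₁})^{1−q} s₀ λ^{1−q}. -/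

import Mathlib

open scoped BigOperators

/-- Elementwise sup norm of a real matrix. -/
noncomputable def elemSupNorm {p q : ℕ} (A : Matrix (Fin p) (Fin q) ℝ) : ℝ :=
  ⨆ i, ⨆ j, |A i j|

/-- Matrix ℓ₁ norm: maximum absolute column sum. -/
noncomputable def matL1Norm {p q : ℕ} (A : Matrix (Fin p) (Fin q) ℝ) : ℝ :=
  ⨆ j, ∑ i, |A i j|

lemma schur_test {p : ℕ} (A : Matrix (Fin p) (Fin p) ℝ) (C : ℝ) (hC : 0 ≤ C)
    (hrow : ∀ i, ∑ j, |A i j| ≤ C) (hcol : ∀ j, ∑ i, |A i j| ≤ C) :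
    ‖(Matrix.toEuclideanCLM (𝕜 := ℝ)) A‖ ≤ C := by
  apply ContinuousLinearMap.opNorm_le_bound _ hC
  intro x
  have hker : ∀ i, ((Matrix.toEuclideanCLM (𝕜 := ℝ)) A) x i = ∑ j, A i j * x j := by
    intro i
    have := Matrix.ofLp_toEuclideanCLM (𝕜 := ℝ) A x
    have h2 := congrFun this i
    simpa [Matrix.toLin'_apply, Matrix.mulVec, dotProduct] using h2
  rw [EuclideanSpace.norm_eq, EuclideanSpace.norm_eq]
  have key : ∑ i, ‖((Matrix.toEuclideanCLM (𝕜 := ℝ)) A) x i‖ ^ 2 ≤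
      C ^ 2 * ∑ j, ‖x j‖ ^ 2 := by
    have step1 : ∀ i, ‖((Matrix.toEuclideanCLM (𝕜 := ℝ)) A) x i‖ ^ 2 ≤
        C * ∑ j, |A i j| * (x j) ^ 2 := by
      intro i
      rw [hker i, Real.norm_eq_abs, sq_abs]
      have h1 : (∑ j, A i j * x j) ^ 2 ≤ (∑ j, |A i j| * |x j|) ^ 2 := by
        have := Finset.abs_sum_le_sum_abs (fun j => A i j * x j) Finset.univ
        simp only [abs_mul] at this
        calc (∑ j, A i j * x j) ^ 2 ≤ |∑ j, A i j * x j| ^ 2 := by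
              rw [sq_abs]
          _ ≤ (∑ j, |A i j| * |x j|) ^ 2 := by
              apply pow_le_pow_left₀ (abs_nonneg _) this
      have h2 : (∑ j, |A i j| * |x j|) ^ 2 ≤
          (∑ j, |A i j|) * (∑ j, |A i j| * (x j)^2) := by
        have := Finset.sum_mul_sq_le_sq_mul_sq Finset.univ
          (fun j => Real.sqrt |A i j|) (fun j => Real.sqrt |A i j| * |x j|)
        calc (∑ j, |A i j| * |x j|) ^ 2
            = (∑ j, Real.sqrt |A i j| * (Real.sqrt |A i j| * |x j|)) ^ 2 := by
              congr 1; apply Finset.sum_congr rfl; intro j _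
              rw [← mul_assoc, Real.mul_self_sqrt (abs_nonneg _)]
          _ ≤ (∑ j, Real.sqrt |A i j| ^ 2) * (∑ j, (Real.sqrt |A i j| * |x j|) ^ 2) := this
          _ = (∑ j, |A i j|) * (∑ j, |A i j| * (x j)^2) := by
              congr 1
              · apply Finset.sum_congr rfl; intro j _; exact Real.sq_sqrt (abs_nonneg _)
              · apply Finset.sum_congr rfl; intro j _
                rw [mul_pow, Real.sq_sqrt (abs_nonneg _), sq_abs]
      have h3 : (∑ j, |A i j|) * (∑ j, |A i j| * (x j)^2) ≤
          C * ∑ j, |A i j| * (x j)^2 := by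
        apply mul_le_mul_of_nonneg_right (hrow i)
        apply Finset.sum_nonneg; intro j _; positivity
      linarith
    calc ∑ i, ‖((Matrix.toEuclideanCLM (𝕜 := ℝ)) A) x i‖ ^ 2
        ≤ ∑ i, C * ∑ j, |A i j| * (x j) ^ 2 := Finset.sum_le_sum (fun i _ => step1 i)
      _ = C * ∑ j, (∑ i, |A i j|) * (x j) ^ 2 := by
          rw [← Finset.mul_sum, Finset.sum_comm]
          congr 1; apply Finset.sum_congr rfl; intro j _
          rw [Finset.sum_mul]
      _ ≤ C * ∑ j, C * (x j) ^ 2 := by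
          apply mul_le_mul_of_nonneg_left _ hC
          apply Finset.sum_le_sum; intro j _
          exact mul_le_mul_of_nonneg_right (hcol j) (sq_nonneg _)
      _ = C ^ 2 * ∑ j, ‖x j‖ ^ 2 := by
          rw [← Finset.mul_sum]
          simp only [Real.norm_eq_abs, sq_abs]
          ring
  calc Real.sqrt (∑ i, ‖((Matrix.toEuclideanCLM (𝕜 := ℝ)) A) x i‖ ^ 2)
      ≤ Real.sqrt (C ^ 2 * ∑ j, ‖x j‖ ^ 2) := Real.sqrt_le_sqrt key
    _ = C * Real.sqrt (∑ j, ‖x j‖ ^ 2) := by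
        rw [Real.sqrt_mul (sq_nonneg _), Real.sqrt_sq hC]

/-- Deterministic core of Theorem 6 (spectral norm bound) for the CLIME estimator. -/
theorem clime_spectral_bound {p : ℕ} (hp : 0 < p)
    (Om₀ S₀ Sn Omhat1 Omhat : Matrix (Fin p) (Fin p) ℝ)
    (q s₀ lam : ℝ) (hq0 : 0 ≤ q) (hq1 : q < 1) (hs₀ : 0 ≤ s₀)
    (hΩsym : Om₀.IsSymm) (hΩpd : Om₀.PosDef)
    (hS : S₀ = Om₀⁻¹)
    (hsparse : ∀ i, ∑ j, |Om₀ i j| ^ q ≤ s₀)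
    -- feasibility of Ω̂₁
    (hfeas : ∀ i j, |(Sn * Omhat1 - 1) i j| ≤ lam)
    -- column-wise ℓ₁-minimality of Ω̂₁
    (hmin : ∀ i : Fin p, ∀ β : Fin p → ℝ,
      (∀ k, |Sn.mulVec β k - (if k = i then (1 : ℝ) else 0)| ≤ lam) →
        ∑ j, |Omhat1 j i| ≤ ∑ j, |β j|)
    -- CLIME symmetrization: Ω̂ is symmetric and each entry is the smaller-magnitude
    -- one among the (i,j) and (j,i) entries of Ω̂₁
    (hsym : Omhat.IsSymm)
    (hpick : ∀ i j, Omhat i j = Omhat1 i j ∨ Omhat i j = Omhat1 j i)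
    (hmag : ∀ i j, |Omhat i j| ≤ |Omhat1 i j|)
    -- tuning parameter condition
    (hlam : matL1Norm Om₀ * elemSupNorm (Sn - S₀) ≤ lam) :
    ‖(Matrix.toEuclideanCLM (𝕜 := ℝ)) (Omhat - Om₀)‖ ≤
      2 * (1 + 2 ^ (1 - q) + 3 ^ (1 - q)) * (4 * matL1Norm Om₀) ^ (1 - q) *
        s₀ * lam ^ (1 - q) := by
  classical
  set M := matL1Norm Om₀ with hMdef
  set E := elemSupNorm (Sn - S₀) with hEdef
  have i0 : Fin p := ⟨0, hp⟩
  -- basic bounds for the sups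
  have hMcol : ∀ j, ∑ i, |Om₀ i j| ≤ M := by
    intro j
    exact le_ciSup (f := fun j => ∑ i, |Om₀ i j|)
      (Set.Finite.bddAbove (Set.finite_range _)) j
  have hM0 : 0 ≤ M := le_trans (Finset.sum_nonneg fun i _ => abs_nonneg _) (hMcol i0)
  have hE : ∀ i j, |(Sn - S₀) i j| ≤ E := by
    intro i j
    refine le_trans (le_ciSup (f := fun j' => |(Sn - S₀) i j'|)
      (Set.Finite.bddAbove (Set.finite_range _)) j) ?_
    exact le_ciSup (f := fun i' => ⨆ j', |(Sn - S₀) i' j'|)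
      (Set.Finite.bddAbove (Set.finite_range _)) i
  have hE0 : 0 ≤ E := le_trans (abs_nonneg _) (hE i0 i0)
  have hlam0 : 0 ≤ lam := le_trans (abs_nonneg _) (hfeas i0 i0)
  -- symmetry facts
  have hOsym : ∀ i j, Om₀ i j = Om₀ j i := fun i j => (hΩsym.apply i j).symm
  have hrowM : ∀ i, ∑ j, |Om₀ i j| ≤ M := by
    intro i
    calc ∑ j, |Om₀ i j| = ∑ j, |Om₀ j i| := by
          apply Finset.sum_congr rfl; intro j _; rw [hOsym i j]
      _ ≤ M := hMcol i
  have hsparse_col : ∀ j, ∑ i, |Om₀ i j| ^ q ≤ s₀ := by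
    intro j
    calc ∑ i, |Om₀ i j| ^ q = ∑ i, |Om₀ j i| ^ q := by
          apply Finset.sum_congr rfl; intro i _; rw [hOsym i j]
      _ ≤ s₀ := hsparse j
  -- invertibility
  have hdet : IsUnit Om₀.det := (Matrix.PosDef.det_pos hΩpd).ne'.isUnit
  have hOmS : Om₀ * S₀ = 1 := by rw [hS]; exact Matrix.mul_nonsing_inv Om₀ hdet
  have hSOm : S₀ * Om₀ = 1 := by rw [hS]; exact Matrix.nonsing_inv_mul Om₀ hdet
  -- feasibility of the columns of Om₀
  have hfeas0 : ∀ i k, |Sn.mulVec (fun j => Om₀ j i) k - (if k = i then (1:ℝ) else 0)| ≤ lam := by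
    intro i k
    have h1 : Sn.mulVec (fun j => Om₀ j i) k = (Sn * Om₀) k i := by
      simp [Matrix.mulVec, dotProduct, Matrix.mul_apply]
    have h2 : (if k = i then (1:ℝ) else 0) = (1 : Matrix (Fin p) (Fin p) ℝ) k i :=
      (Matrix.one_apply).symm
    rw [h1, h2]
    have h3 : (Sn * Om₀) k i - (1 : Matrix (Fin p) (Fin p) ℝ) k i
        = ((Sn - S₀) * Om₀) k i := by
      have : (Sn - S₀) * Om₀ = Sn * Om₀ - 1 := by
        rw [Matrix.sub_mul, hSOm]
      rw [this]; simp [Matrix.sub_apply]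
    rw [h3]
    calc |((Sn - S₀) * Om₀) k i| ≤ ∑ j, |(Sn - S₀) k j| * |Om₀ j i| := by
          rw [Matrix.mul_apply]
          refine le_trans (Finset.abs_sum_le_sum_abs _ _) ?_
          apply Finset.sum_le_sum; intro j _; rw [abs_mul]
      _ ≤ ∑ j, E * |Om₀ j i| := by
          apply Finset.sum_le_sum; intro j _
          exact mul_le_mul_of_nonneg_right (hE k j) (abs_nonneg _)
      _ = E * ∑ j, |Om₀ j i| := by rw [Finset.mul_sum]
      _ ≤ E * M := mul_le_mul_of_nonneg_left (hMcol i) hE0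
      _ ≤ lam := by rw [mul_comm]; exact hlam
  -- column sums of Omhat1
  have hcolhat1 : ∀ i, ∑ j, |Omhat1 j i| ≤ ∑ j, |Om₀ j i| := fun i =>
    hmin i (fun j => Om₀ j i) (hfeas0 i)
  have hcolhat1M : ∀ i, ∑ j, |Omhat1 j i| ≤ M := fun i => le_trans (hcolhat1 i) (hMcol i)
  -- generic bound for entries of Om₀ * B
  have hmulbd : ∀ (B : Matrix (Fin p) (Fin p) ℝ) (c : ℝ), 0 ≤ c →
      (∀ k l, |B k l| ≤ c) → ∀ i j, |(Om₀ * B) i j| ≤ M * c := by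
    intro B c hc hB i j
    calc |(Om₀ * B) i j| ≤ ∑ k, |Om₀ i k| * |B k j| := by
          rw [Matrix.mul_apply]
          refine le_trans (Finset.abs_sum_le_sum_abs _ _) ?_
          apply Finset.sum_le_sum; intro k _; rw [abs_mul]
      _ ≤ ∑ k, |Om₀ i k| * c := by
          apply Finset.sum_le_sum; intro k _
          exact mul_le_mul_of_nonneg_left (hB k j) (abs_nonneg _)
      _ = (∑ k, |Om₀ i k|) * c := by rw [Finset.sum_mul]
      _ ≤ M * c := mul_le_mul_of_nonneg_right (hrowM i) hc
  -- elementwise bound for Omhat1 - Om₀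
  have hkey : Omhat1 - Om₀ = Om₀ * ((S₀ - Sn) * Omhat1) + Om₀ * (Sn * Omhat1 - 1) := by
    have h1 : Om₀ * ((S₀ - Sn) * Omhat1) + Om₀ * (Sn * Omhat1 - 1)
        = Om₀ * S₀ * Omhat1 - Om₀ := by noncomm_ring
    rw [h1, hOmS, one_mul]
  have helem1 : ∀ i j, |Omhat1 i j - Om₀ i j| ≤ 2 * (M * lam) := by
    intro i j
    have hb1 : ∀ k l, |((S₀ - Sn) * Omhat1) k l| ≤ lam := by
      intro k l
      calc |((S₀ - Sn) * Omhat1) k l| ≤ ∑ m, |(S₀ - Sn) k m| * |Omhat1 m l| := by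
            rw [Matrix.mul_apply]
            refine le_trans (Finset.abs_sum_le_sum_abs _ _) ?_
            apply Finset.sum_le_sum; intro m _; rw [abs_mul]
        _ ≤ ∑ m, E * |Omhat1 m l| := by
            apply Finset.sum_le_sum; intro m _
            refine mul_le_mul_of_nonneg_right ?_ (abs_nonneg _)
            have heq : |(S₀ - Sn) k m| = |(Sn - S₀) k m| := by
              rw [Matrix.sub_apply, Matrix.sub_apply, abs_sub_comm]
            rw [heq]
            exact hE k m
        _ = E * ∑ m, |Omhat1 m l| := by rw [Finset.mul_sum]
        _ ≤ E * M := mul_le_mul_of_nonneg_left (hcolhat1M l) hE0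
        _ ≤ lam := by rw [mul_comm]; exact hlam
    have t1 := hmulbd ((S₀ - Sn) * Omhat1) lam hlam0 hb1 i j
    have t2 := hmulbd (Sn * Omhat1 - 1) lam hlam0 hfeas i j
    have : Omhat1 i j - Om₀ i j
        = (Om₀ * ((S₀ - Sn) * Omhat1)) i j + (Om₀ * (Sn * Omhat1 - 1)) i j := by
      have := congrFun (congrFun hkey i) j
      simpa [Matrix.sub_apply, Matrix.add_apply] using this
    rw [this]
    calc |(Om₀ * ((S₀ - Sn) * Omhat1)) i j + (Om₀ * (Sn * Omhat1 - 1)) i j|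
        ≤ |(Om₀ * ((S₀ - Sn) * Omhat1)) i j| + |(Om₀ * (Sn * Omhat1 - 1)) i j| :=
          abs_add_le _ _
      _ ≤ M * lam + M * lam := add_le_add t1 t2
      _ = 2 * (M * lam) := by ring
  -- elementwise bound for the symmetrized estimator
  set t : ℝ := 4 * (M * lam) with htdef
  have hMl0 : 0 ≤ M * lam := mul_nonneg hM0 hlam0
  have helem : ∀ i j, |Omhat i j - Om₀ i j| ≤ t := by
    intro i j
    rcases hpick i j with h | h
    · rw [h]; calc |Omhat1 i j - Om₀ i j| ≤ 2 * (M * lam) := helem1 i j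
        _ ≤ t := by rw [htdef]; linarith
    · rw [h, hOsym i j]
      calc |Omhat1 j i - Om₀ j i| ≤ 2 * (M * lam) := helem1 j i
        _ ≤ t := by rw [htdef]; linarith
  -- nonnegativity of the RHS
  have hRHS0 : 0 ≤ 2 * (1 + 2 ^ (1 - q) + 3 ^ (1 - q)) * (4 * M) ^ (1 - q) *
      s₀ * lam ^ (1 - q) := by
    have h2 : (0:ℝ) ≤ 2 ^ (1 - q) := Real.rpow_nonneg (by norm_num) _
    have h3 : (0:ℝ) ≤ 3 ^ (1 - q) := Real.rpow_nonneg (by norm_num) _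
    have h4 : (0:ℝ) ≤ (4 * M) ^ (1 - q) := Real.rpow_nonneg (by linarith) _
    have h5 : (0:ℝ) ≤ lam ^ (1 - q) := Real.rpow_nonneg hlam0 _
    have : (0:ℝ) ≤ 2 * (1 + 2 ^ (1 - q) + 3 ^ (1 - q)) := by linarith
    positivity
  rcases eq_or_lt_of_le hMl0 with h0 | hpos
  · -- degenerate case: M * lam = 0, so Omhat = Om₀
    have ht0 : t = 0 := by rw [htdef, ← h0]; ring
    have hzero : Omhat - Om₀ = 0 := by
      ext i j
      simp only [Matrix.sub_apply, Matrix.zero_apply, sub_eq_zero]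
      have h := helem i j
      rw [ht0] at h
      have h2 : |Omhat i j - Om₀ i j| = 0 := le_antisymm h (abs_nonneg _)
      rw [abs_eq_zero, sub_eq_zero] at h2
      exact h2
    rw [hzero, map_zero, norm_zero]
    exact hRHS0
  -- main case
  have ht : 0 < t := by rw [htdef]; linarith
  have ha : 0 < 1 - q := by linarith
  have htq : t = t ^ q * t ^ (1 - q) := by
    rw [← Real.rpow_add ht]
    norm_num
  have ht1q : 0 ≤ t ^ (1 - q) := Real.rpow_nonneg ht.le _
  -- column sum bound for Omhat - Om₀
  have colbd : ∀ j, ∑ i, |Omhat i j - Om₀ i j| ≤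
      2 * s₀ * t ^ (1 - q) + 2 * (3 ^ (1 - q)) * (s₀ * t ^ (1 - q)) := by
    intro j
    set A : Finset (Fin p) := Finset.univ.filter (fun i => 2 * t ≤ |Omhat i j|) with hAdef
    have hA1 : ∀ i ∈ A, t ≤ |Om₀ i j| := by
      intro i hi
      rw [hAdef, Finset.mem_filter] at hi
      have h1 := helem i j
      have h2 : |Omhat i j| - |Om₀ i j| ≤ |Omhat i j - Om₀ i j| := abs_sub_abs_le_abs_sub _ _
      linarith [hi.2]
    have hcard : (A.card : ℝ) * t ^ q ≤ s₀ := by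
      have : (A.card : ℝ) * t ^ q = ∑ i ∈ A, t ^ q := by
        rw [Finset.sum_const, nsmul_eq_mul]
      rw [this]
      calc ∑ i ∈ A, t ^ q ≤ ∑ i ∈ A, |Om₀ i j| ^ q := by
            apply Finset.sum_le_sum; intro i hi
            exact Real.rpow_le_rpow ht.le (hA1 i hi) hq0
        _ ≤ ∑ i, |Om₀ i j| ^ q := by
            apply Finset.sum_le_sum_of_subset_of_nonneg (Finset.subset_univ _)
            intro i _ _
            exact Real.rpow_nonneg (abs_nonneg _) _
        _ ≤ s₀ := hsparse_col j
    have S1 : ∑ i ∈ A, |Omhat i j - Om₀ i j| ≤ s₀ * t ^ (1 - q) := by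
      calc ∑ i ∈ A, |Omhat i j - Om₀ i j| ≤ ∑ i ∈ A, t := by
            apply Finset.sum_le_sum; intro i _; exact helem i j
        _ = (A.card : ℝ) * t := by rw [Finset.sum_const, nsmul_eq_mul]
        _ = ((A.card : ℝ) * t ^ q) * t ^ (1 - q) := by rw [mul_assoc, ← htq]
        _ ≤ s₀ * t ^ (1 - q) := mul_le_mul_of_nonneg_right hcard ht1q
    have hAc_small : ∀ i ∉ A, |Om₀ i j| ≤ 3 * t := by
      intro i hi
      rw [hAdef, Finset.mem_filter] at hi
      push_neg at hi
      have h2 : |Omhat i j| < 2 * t := hi (Finset.mem_univ i)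
      have h3 := helem i j
      have h4 : |Om₀ i j| - |Omhat i j| ≤ |Omhat i j - Om₀ i j| := by
        rw [abs_sub_comm]
        exact abs_sub_abs_le_abs_sub _ _
      linarith
    have hsmall_bd : ∀ i ∉ A, |Om₀ i j| ≤ |Om₀ i j| ^ q * (3 * t) ^ (1 - q) := by
      intro i hi
      rcases eq_or_lt_of_le (abs_nonneg (Om₀ i j)) with hz | hz
      · rw [← hz]
        exact mul_nonneg (Real.rpow_nonneg le_rfl _) (Real.rpow_nonneg (by linarith) _)
      · calc |Om₀ i j| = |Om₀ i j| ^ q * |Om₀ i j| ^ (1 - q) := by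
              rw [← Real.rpow_add hz]; norm_num
          _ ≤ |Om₀ i j| ^ q * (3 * t) ^ (1 - q) := by
              apply mul_le_mul_of_nonneg_left _ (Real.rpow_nonneg (abs_nonneg _) _)
              exact Real.rpow_le_rpow (abs_nonneg _) (hAc_small i hi) ha.le
    have S2 : ∑ i ∈ Finset.univ.filter (fun i => i ∉ A), |Om₀ i j| ≤
        s₀ * (3 * t) ^ (1 - q) := by
      calc ∑ i ∈ Finset.univ.filter (fun i => i ∉ A), |Om₀ i j|
          ≤ ∑ i ∈ Finset.univ.filter (fun i => i ∉ A), |Om₀ i j| ^ q * (3 * t) ^ (1 - q) := by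
            apply Finset.sum_le_sum; intro i hi
            rw [Finset.mem_filter] at hi
            exact hsmall_bd i hi.2
        _ ≤ (∑ i, |Om₀ i j| ^ q) * (3 * t) ^ (1 - q) := by
            rw [← Finset.sum_mul]
            apply mul_le_mul_of_nonneg_right _ (Real.rpow_nonneg (by linarith) _)
            apply Finset.sum_le_sum_of_subset_of_nonneg (Finset.subset_univ _)
            intro i _ _
            exact Real.rpow_nonneg (abs_nonneg _) _
        _ ≤ s₀ * (3 * t) ^ (1 - q) :=
            mul_le_mul_of_nonneg_right (hsparse_col j) (Real.rpow_nonneg (by linarith) _)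
    have hcolsum : ∑ i, |Omhat i j| ≤ ∑ i, |Om₀ i j| := by
      calc ∑ i, |Omhat i j| ≤ ∑ i, |Omhat1 i j| :=
            Finset.sum_le_sum (fun i _ => hmag i j)
        _ ≤ ∑ i, |Om₀ i j| := hcolhat1 j
    have hsplit : ∀ (f : Fin p → ℝ), ∑ i ∈ A, f i +
        ∑ i ∈ Finset.univ.filter (fun i => i ∉ A), f i = ∑ i, f i := by
      intro f
      have := Finset.sum_filter_add_sum_filter_not Finset.univ (fun i => i ∈ A) f
      rw [Finset.filter_mem_eq_inter, Finset.univ_inter] at this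
      exact this
    have S3 : ∑ i ∈ Finset.univ.filter (fun i => i ∉ A), |Omhat i j| ≤
        s₀ * t ^ (1 - q) + s₀ * (3 * t) ^ (1 - q) := by
      have e1 := hsplit (fun i => |Omhat i j|)
      have e2 := hsplit (fun i => |Om₀ i j|)
      have hAd : ∑ i ∈ A, (|Om₀ i j| - |Omhat i j|) ≤ s₀ * t ^ (1 - q) := by
        calc ∑ i ∈ A, (|Om₀ i j| - |Omhat i j|) ≤ ∑ i ∈ A, |Omhat i j - Om₀ i j| := by
              apply Finset.sum_le_sum; intro i _
              rw [abs_sub_comm]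
              exact abs_sub_abs_le_abs_sub _ _
          _ ≤ s₀ * t ^ (1 - q) := S1
      have hAsum : ∑ i ∈ A, (|Om₀ i j| - |Omhat i j|)
          = ∑ i ∈ A, |Om₀ i j| - ∑ i ∈ A, |Omhat i j| := Finset.sum_sub_distrib _ _
      linarith
    have S4 : ∑ i ∈ Finset.univ.filter (fun i => i ∉ A), |Omhat i j - Om₀ i j| ≤
        s₀ * t ^ (1 - q) + 2 * (s₀ * (3 * t) ^ (1 - q)) := by
      calc ∑ i ∈ Finset.univ.filter (fun i => i ∉ A), |Omhat i j - Om₀ i j|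
          ≤ ∑ i ∈ Finset.univ.filter (fun i => i ∉ A), (|Omhat i j| + |Om₀ i j|) := by
            apply Finset.sum_le_sum; intro i _
            exact abs_sub (Omhat i j) (Om₀ i j)
        _ = ∑ i ∈ Finset.univ.filter (fun i => i ∉ A), |Omhat i j| +
            ∑ i ∈ Finset.univ.filter (fun i => i ∉ A), |Om₀ i j| := Finset.sum_add_distrib
        _ ≤ s₀ * t ^ (1 - q) + 2 * (s₀ * (3 * t) ^ (1 - q)) := by linarith [S2, S3]
    have h3t : (3 * t) ^ (1 - q) = 3 ^ (1 - q) * t ^ (1 - q) :=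
      Real.mul_rpow (by norm_num) ht.le
    have := hsplit (fun i => |Omhat i j - Om₀ i j|)
    rw [h3t] at S4 S2
    calc ∑ i, |Omhat i j - Om₀ i j|
        = ∑ i ∈ A, |Omhat i j - Om₀ i j| +
          ∑ i ∈ Finset.univ.filter (fun i => i ∉ A), |Omhat i j - Om₀ i j| := this.symm
      _ ≤ 2 * s₀ * t ^ (1 - q) + 2 * (3 ^ (1 - q)) * (s₀ * t ^ (1 - q)) := by
          have h3q : (0:ℝ) ≤ 3 ^ (1 - q) := Real.rpow_nonneg (by norm_num) _
          nlinarith [S1, S4, mul_nonneg hs₀ ht1q]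
  -- convert the RHS
  have hRHSeq : 2 * (1 + 2 ^ (1 - q) + 3 ^ (1 - q)) * (4 * M) ^ (1 - q) * s₀ * lam ^ (1 - q)
      = 2 * (1 + 2 ^ (1 - q) + 3 ^ (1 - q)) * s₀ * t ^ (1 - q) := by
    have : t ^ (1 - q) = (4 * M) ^ (1 - q) * lam ^ (1 - q) := by
      rw [htdef, show 4 * (M * lam) = (4 * M) * lam by ring]
      exact Real.mul_rpow (by linarith) hlam0
    rw [this]; ring
  have colbd' : ∀ j, ∑ i, |(Omhat - Om₀) i j| ≤
      2 * (1 + 2 ^ (1 - q) + 3 ^ (1 - q)) * (4 * M) ^ (1 - q) * s₀ * lam ^ (1 - q) := by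
    intro j
    rw [hRHSeq]
    have h2q : (0:ℝ) ≤ 2 ^ (1 - q) := Real.rpow_nonneg (by norm_num) _
    have h3q : (0:ℝ) ≤ 3 ^ (1 - q) := Real.rpow_nonneg (by norm_num) _
    calc ∑ i, |(Omhat - Om₀) i j| = ∑ i, |Omhat i j - Om₀ i j| := by
          apply Finset.sum_congr rfl; intro i _; rw [Matrix.sub_apply]
      _ ≤ 2 * s₀ * t ^ (1 - q) + 2 * (3 ^ (1 - q)) * (s₀ * t ^ (1 - q)) := colbd j
      _ ≤ 2 * (1 + 2 ^ (1 - q) + 3 ^ (1 - q)) * s₀ * t ^ (1 - q) := by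
          nlinarith [mul_nonneg hs₀ ht1q]
  have rowbd : ∀ i, ∑ j, |(Omhat - Om₀) i j| ≤
      2 * (1 + 2 ^ (1 - q) + 3 ^ (1 - q)) * (4 * M) ^ (1 - q) * s₀ * lam ^ (1 - q) := by
    intro i
    have hsymD : ∀ i j, (Omhat - Om₀) i j = (Omhat - Om₀) j i := by
      intro i j
      rw [Matrix.sub_apply, Matrix.sub_apply, hOsym i j, (hsym.apply j i).symm]
    calc ∑ j, |(Omhat - Om₀) i j| = ∑ j, |(Omhat - Om₀) j i| := by
          apply Finset.sum_congr rfl; intro j _; rw [hsymD i j]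
      _ ≤ _ := colbd' i
  exact schur_test _ _ hRHS0 rowbd colbd'
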